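/- Let η₊, η₋ solve −η'' + Vη = 0 with Wronskian W ≠ 0, and let δV be continuous and compactly supported. Define δη±(x) = −∫ q(x,y) δV(y) η±(y) dy where q(x,y) = W^{−1}(η₋(x)η₊(y) 1_{x≤y} + η₊(x)η₋(y) 1_{x≥y}). Then the first variation of the Wronskian, δW(x) = δη₊(x)η₋'(x) + η₊(x)δη₋'(x) − δη₊'(x)η₋(x) − η₊'(x)δη₋(x), equals −∫ η₊(y) η₋(y) δV(y) dy, independently of x. -/
import Mathlib


open MeasureTheory Set

lemma aux_hasDerivAt_Iio (g : ℝ → ℝ) (hg : Continuous g)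
    (hgcs : HasCompactSupport g) (x : ℝ) :
    HasDerivAt (fun t => ∫ y in Iio t, g y) (g x) x := by
  obtain ⟨r, hr⟩ := hgcs.isBounded.subset_closedBall 0
  set c : ℝ := -(r + 1) with hc
  have hzero : ∀ y ∈ Iic c, g y = 0 := by
    intro y hy
    by_contra h
    have hmem : y ∈ tsupport g := subset_tsupport g h
    have := hr hmem
    rw [Real.closedBall_eq_Icc] at this
    simp only [mem_Icc, zero_sub, zero_add] at this
    simp only [mem_Iic, hc] at hy
    linarith [this.1]
  have hIntOn : ∀ s : Set ℝ, IntegrableOn g s := fun s =>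
    (hg.integrable_of_hasCompactSupport hgcs).integrableOn
  have key : ∀ t, ∫ y in Iio t, g y = ∫ y in c..t, g y := by
    intro t
    rw [← integral_Iic_eq_integral_Iio,
      ← intervalIntegral.integral_Iic_sub_Iic (hIntOn _) (hIntOn _),
      setIntegral_eq_zero_of_forall_eq_zero hzero, sub_zero]
  have H : HasDerivAt (fun t => ∫ y in c..t, g y) (g x) x :=
    intervalIntegral.integral_hasDerivAt_right (hg.intervalIntegrable c x)
      (hg.stronglyMeasurableAtFilter _ _) hg.continuousAt
  exact (funext key : (fun t => ∫ y in Iio t, g y) = _) ▸ H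

lemma aux_hasDerivAt_Ici (g : ℝ → ℝ) (hg : Continuous g)
    (hgcs : HasCompactSupport g) (x : ℝ) :
    HasDerivAt (fun t => ∫ y in Ici t, g y) (-g x) x := by
  have hInt : Integrable g := hg.integrable_of_hasCompactSupport hgcs
  have key : ∀ t, ∫ y in Ici t, g y = (∫ y, g y) - ∫ y in Iio t, g y := by
    intro t
    rw [← intervalIntegral.integral_Iio_add_Ici hInt.integrableOn hInt.integrableOn]
    ring
  have H : HasDerivAt (fun t => (∫ y, g y) - ∫ y in Iio t, g y) (-g x) x := by
    simpa using (aux_hasDerivAt_Iio g hg hgcs x).const_sub (∫ y, g y)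
  exact (funext key : (fun t => ∫ y in Ici t, g y) = _) ▸ H

/-- The first variation of the Wronskian with respect to the potential:
`δW(x) = -∫ η₊ η₋ δV`, independently of `x`. -/
theorem stmt_11 (V ηp ηm : ℝ → ℝ) (hV : Continuous V)
    (hp : ContDiff ℝ 2 ηp) (hm : ContDiff ℝ 2 ηm)
    (heqp : ∀ x, deriv (deriv ηp) x = V x * ηp x)
    (heqm : ∀ x, deriv (deriv ηm) x = V x * ηm x)
    (w : ℝ) (hw : w ≠ 0)
    (hwron : ∀ x, ηp x * deriv ηm x - deriv ηp x * ηm x = w)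
    (δV : ℝ → ℝ) (hδV : Continuous δV) (hcs : HasCompactSupport δV)
    (q : ℝ → ℝ → ℝ)
    (hq : ∀ x y, q x y = if x ≤ y then ηm x * ηp y / w else ηp x * ηm y / w)
    (δηp δηm : ℝ → ℝ)
    (hδηp : ∀ x, δηp x = -∫ y : ℝ, q x y * δV y * ηp y)
    (hδηm : ∀ x, δηm x = -∫ y : ℝ, q x y * δV y * ηm y) :
    ∀ x : ℝ, δηp x * deriv ηm x + ηp x * deriv δηm x - deriv δηp x * ηm x
        - deriv ηp x * δηm x = -∫ y : ℝ, ηp y * ηm y * δV y := by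
  intro x
  have hpc : Continuous ηp := hp.continuous
  have hmc : Continuous ηm := hm.continuous
  have hpd : Differentiable ℝ ηp := hp.differentiable (by norm_num)
  have hmd : Differentiable ℝ ηm := hm.differentiable (by norm_num)
  -- the four base integrand functions
  set fpp : ℝ → ℝ := fun y => ηp y * δV y * ηp y with hfpp
  set fmp : ℝ → ℝ := fun y => ηm y * δV y * ηp y with hfmp
  set fpm : ℝ → ℝ := fun y => ηp y * δV y * ηm y with hfpm
  set fmm : ℝ → ℝ := fun y => ηm y * δV y * ηm y with hfmm
  have hcs' : ∀ (a b : ℝ → ℝ), HasCompactSupport (fun y => a y * δV y * b y) := by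
    intro a b
    apply HasCompactSupport.intro hcs.isCompact
    intro y hy
    simp [image_eq_zero_of_notMem_tsupport hy]
  have hcspp := hcs' ηp ηp
  have hcsmp := hcs' ηm ηp
  have hcspm := hcs' ηp ηm
  have hcsmm := hcs' ηm ηm
  have hcpp : Continuous fpp := by fun_prop
  have hcmp : Continuous fmp := by fun_prop
  have hcpm : Continuous fpm := by fun_prop
  have hcmm : Continuous fmm := by fun_prop
  -- the partial integrals
  set Ap : ℝ → ℝ := fun t => ∫ y in Ici t, fpp y with hAp
  set Bp : ℝ → ℝ := fun t => ∫ y in Iio t, fmp y with hBp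
  set Am : ℝ → ℝ := fun t => ∫ y in Ici t, fpm y with hAm
  set Bm : ℝ → ℝ := fun t => ∫ y in Iio t, fmm y with hBm
  -- rewriting δηp and δηm
  have split : ∀ (f : ℝ → ℝ), Continuous f →
      ∀ t, (∫ y : ℝ, q t y * δV y * f y)
        = (ηm t * (∫ y in Ici t, ηp y * δV y * f y)
          + ηp t * (∫ y in Iio t, ηm y * δV y * f y)) / w := by
    intro f hf t
    have h1 : (fun y => q t y * δV y * f y)
        = fun y => (Ici t).indicator (fun y => ηm t * (ηp y * δV y * f y) / w) y
          + (Iio t).indicator (fun y => ηp t * (ηm y * δV y * f y) / w) y := by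
      funext y
      rw [hq]
      by_cases h : t ≤ y
      · rw [indicator_of_mem (mem_Ici.2 h), indicator_of_notMem (by simpa using h),
          if_pos h]
        ring
      · rw [indicator_of_notMem (by simpa using h),
          indicator_of_mem (mem_Iio.2 (lt_of_not_ge h)), if_neg h]
        ring
    have hi1 : Integrable ((Ici t).indicator
        (fun y => ηm t * (ηp y * δV y * f y) / w)) := by
      apply Integrable.indicator _ measurableSet_Ici
      have : Continuous fun y => ηm t * (ηp y * δV y * f y) / w := by fun_prop
      apply this.integrable_of_hasCompactSupport
      apply HasCompactSupport.intro hcs.isCompact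
      intro y hy
      simp [image_eq_zero_of_notMem_tsupport hy]
    have hi2 : Integrable ((Iio t).indicator
        (fun y => ηp t * (ηm y * δV y * f y) / w)) := by
      apply Integrable.indicator _ measurableSet_Iio
      have : Continuous fun y => ηp t * (ηm y * δV y * f y) / w := by fun_prop
      apply this.integrable_of_hasCompactSupport
      apply HasCompactSupport.intro hcs.isCompact
      intro y hy
      simp [image_eq_zero_of_notMem_tsupport hy]
    rw [h1, integral_add hi1 hi2, integral_indicator measurableSet_Ici,
      integral_indicator measurableSet_Iio]
    simp only [integral_div, integral_const_mul]
    ring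
  have hδηp' : ∀ t, δηp t = -((ηm t * Ap t + ηp t * Bp t) / w) := by
    intro t; rw [hδηp, split ηp hpc]
  have hδηm' : ∀ t, δηm t = -((ηm t * Am t + ηp t * Bm t) / w) := by
    intro t; rw [hδηm, split ηm hmc]
  -- derivatives
  have hderiv : ∀ (A B : ℝ → ℝ) (fa fb : ℝ → ℝ), Continuous fa → Continuous fb →
      HasCompactSupport fa → HasCompactSupport fb →
      A = (fun t => ∫ y in Ici t, fa y) → B = (fun t => ∫ y in Iio t, fb y) →
      HasDerivAt (fun t => -((ηm t * A t + ηp t * B t) / w))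
        (-((deriv ηm x * A x + ηm x * (-fa x)
          + (deriv ηp x * B x + ηp x * fb x)) / w)) x := by
    intro A B fa fb hfa hfb hfacs hfbcs hA hB
    have hA' : HasDerivAt A (-fa x) x := hA ▸ aux_hasDerivAt_Ici fa hfa hfacs x
    have hB' : HasDerivAt B (fb x) x := hB ▸ aux_hasDerivAt_Iio fb hfb hfbcs x
    exact ((((hmd x).hasDerivAt.mul hA').add
      ((hpd x).hasDerivAt.mul hB')).div_const w).neg
  have hDp : deriv δηp x = -((deriv ηm x * Ap x + deriv ηp x * Bp x) / w) := by
    have H := hderiv Ap Bp fpp fmp hcpp hcmp hcspp hcsmp rfl rfl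
    have H2 : HasDerivAt δηp (-((deriv ηm x * Ap x + ηm x * (-fpp x)
        + (deriv ηp x * Bp x + ηp x * fmp x)) / w)) x := by
      have : δηp = fun t => -((ηm t * Ap t + ηp t * Bp t) / w) := funext hδηp'
      rw [this]; exact H
    rw [H2.deriv, hfpp, hfmp]
    ring
  have hDm : deriv δηm x = -((deriv ηm x * Am x + deriv ηp x * Bm x) / w) := by
    have H := hderiv Am Bm fpm fmm hcpm hcmm hcspm hcsmm rfl rfl
    have H2 : HasDerivAt δηm (-((deriv ηm x * Am x + ηm x * (-fpm x)
        + (deriv ηp x * Bm x + ηp x * fmm x)) / w)) x := by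
      have : δηm = fun t => -((ηm t * Am t + ηp t * Bm t) / w) := funext hδηm'
      rw [this]; exact H
    rw [H2.deriv, hfpm, hfmm]
    ring
  -- combine
  have htot : Bp x + Am x = ∫ y : ℝ, ηp y * ηm y * δV y := by
    have heq : fmp = fun y => ηp y * ηm y * δV y := by
      funext y; simp only [hfmp]; ring
    have heq2 : fpm = fun y => ηp y * ηm y * δV y := by
      funext y; simp only [hfpm]; ring
    have hInt : Integrable (fun y => ηp y * ηm y * δV y) := by
      rw [← heq]; exact hcmp.integrable_of_hasCompactSupport hcsmp
    rw [hBp, hAm, heq, heq2]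
    exact intervalIntegral.integral_Iio_add_Ici hInt.integrableOn hInt.integrableOn
  rw [hδηp' x, hδηm' x, hDp, hDm, ← htot]
  have hwx := hwron x
  field_simp
  linear_combination (-(Am x) - Bp x) * hwx
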